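/- arXiv:2308.00984 — 3 statements merged into one kernel-verified Lean document; each statement's English description precedes it below -/
import Mathlib

section
/- Let (Ω,F,P) be a complete probability space and X : [0,∞) → Ω → ℝ a process such that each X_t is F-measurable, almost every path t ↦ X_t(ω) is continuous, and for every t ∈ (0,∞) the law of X_t is absolutely continuous with respect to Lebesgue measure. Assign to each atomic proposition a ∈ AP a Borel set B_a ⊆ ℝ whose topological boundary ∂B_a has Lebesgue measure zero. Then for every formula φ built from atomic propositions by ¬, ∧, and ◇_{[S,T]} (0 ≤ S < T real), there exists K ∈ F ⊗ B([0,∞)) such that: (i) for P-a.e. ω the section K_ω := {t : (ω,t) ∈ K} is a closed subset of [0,∞); (ii) for P-a.e. ω, K_ω has Lebesgue measure zero; (iii) for every t ∈ (0,∞), P({ω : (ω,t) ∈ K}) = 0; (iv) for P-a.e. ω, the frontier in [0,∞) of the time set ⟦φ⟧_ω := {t ≥ 0 : X(ω),t ⊨ φ} is contained in K_ω. -/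
open MeasureTheory
open scoped NNReal ENNReal Topology

/-- Formulas built from atomic propositions by `¬`, `∧` and `◇_{[S,T]}`. -/
inductive DForm (AP : Type*) : Type _ where
  | atom : AP → DForm AP
  | not : DForm AP → DForm AP
  | and : DForm AP → DForm AP → DForm AP
  | dia : ℝ≥0 → ℝ≥0 → DForm AP → DForm AP

/-- Well-formedness: each diamond `◇_{[S,T]}` has `0 ≤ S < T`. -/
def DForm.ok {AP : Type*} : DForm AP → Prop
  | DForm.atom _ => True
  | DForm.not φ => φ.ok
  | DForm.and φ ψ => φ.ok ∧ ψ.ok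
  | DForm.dia S T φ => S < T ∧ φ.ok

/-- Continuous-time satisfaction along the path `t ↦ X_t(ω)`, with `a` interpreted by `V a`;
`◇_{[S,T]}φ` holds at `t` iff `φ` holds at `t+s` for some `s ∈ [S,T]`. -/
def DForm.Sat {Ω AP : Type*} (X : ℝ≥0 → Ω → ℝ) (V : AP → Set ℝ) :
    DForm AP → Ω → ℝ≥0 → Prop
  | DForm.atom a => fun ω t => X t ω ∈ V a
  | DForm.not φ => fun ω t => ¬ φ.Sat X V ω t
  | DForm.and φ ψ => fun ω t => φ.Sat X V ω t ∧ ψ.Sat X V ω t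
  | DForm.dia S T φ => fun ω t => ∃ s ∈ Set.Icc S T, φ.Sat X V ω (t + s)

/-- Satisfaction only depends on the path `t ↦ X t ω`. -/
lemma DForm.sat_congr {Ω AP : Type*} (X X' : ℝ≥0 → Ω → ℝ) (V : AP → Set ℝ) (ω : Ω)
    (h : ∀ t, X t ω = X' t ω) :
    ∀ (φ : DForm AP) (t : ℝ≥0), φ.Sat X V ω t ↔ φ.Sat X' V ω t := by
  intro φ
  induction φ with
  | atom a => intro t; simp only [DForm.Sat, h t]
  | not ψ ih => intro t; simp only [DForm.Sat, ih t]
  | and ψ χ ih1 ih2 => intro t; simp only [DForm.Sat, ih1 t, ih2 t]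
  | dia S T ψ ih =>
      intro t
      constructor
      · rintro ⟨s, hs, hsat⟩; exact ⟨s, hs, (ih (t + s)).1 hsat⟩
      · rintro ⟨s, hs, hsat⟩; exact ⟨s, hs, (ih (t + s)).2 hsat⟩

/-- The frontier of a "diamond" time set is contained in the shifted frontiers. -/
lemma dia_frontier_subset (A : Set ℝ≥0) (S T : ℝ≥0) (hST : S ≤ T) :
    frontier {t : ℝ≥0 | ∃ s ∈ Set.Icc S T, t + s ∈ A} ⊆
      {t : ℝ≥0 | t + S ∈ frontier A} ∪ {t : ℝ≥0 | t + T ∈ frontier A} := by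
  set D : Set ℝ≥0 := {t : ℝ≥0 | ∃ s ∈ Set.Icc S T, t + s ∈ A} with hD
  intro t ht
  obtain ⟨htc, hti⟩ := ht
  -- Step A: if some point of `A` lies strictly inside the window, `t` is interior to `D`.
  have key : ∀ a ∈ A, t + S < a → a < t + T → t ∈ interior D := by
    intro a ha h1 h2
    have hUopen : IsOpen ({t' : ℝ≥0 | t' + S < a} ∩ {t' : ℝ≥0 | a < t' + T}) := by
      refine IsOpen.inter ?_ ?_
      · exact isOpen_Iio.preimage (continuous_id.add continuous_const)
      · exact isOpen_Ioi.preimage (continuous_id.add continuous_const)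
    have hUsub : ({t' : ℝ≥0 | t' + S < a} ∩ {t' : ℝ≥0 | a < t' + T}) ⊆ D := by
      rintro t' ⟨h1', h2'⟩
      have hta : t' ≤ a := le_trans le_self_add h1'.le
      refine ⟨a - t', ⟨?_, ?_⟩, ?_⟩
      · exact le_tsub_of_add_le_left h1'.le
      · exact tsub_le_iff_left.2 h2'.le
      · rwa [add_tsub_cancel_of_le hta]
    exact interior_maximal hUsub hUopen ⟨h1, h2⟩
  -- Step B: `closure` gives a window point in `closure A`.
  have hB : ∃ s ∈ Set.Icc S T, t + s ∈ closure A := by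
    obtain ⟨u, hu_mem, hu_lim⟩ := mem_closure_iff_seq_limit.mp htc
    choose s hs hsA using hu_mem
    obtain ⟨s₀, hs₀, ψ, hψ, hψlim⟩ := isCompact_Icc.tendsto_subseq hs
    refine ⟨s₀, hs₀, ?_⟩
    have hlim : Filter.Tendsto (fun n => u (ψ n) + s (ψ n)) Filter.atTop (𝓝 (t + s₀)) :=
      Filter.Tendsto.add (hu_lim.comp hψ.tendsto_atTop) hψlim
    exact mem_closure_of_tendsto hlim (Filter.Eventually.of_forall fun n => hsA (ψ n))
  obtain ⟨s, hs, hsc⟩ := hB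
  -- Step C: that point must be an endpoint of the window.
  have hnotIoo : ¬ (t + S < t + s ∧ t + s < t + T) := by
    rintro ⟨h1, h2⟩
    obtain ⟨a, haIoo, haA⟩ := _root_.mem_closure_iff.mp hsc (Set.Ioo (t + S) (t + T))
      isOpen_Ioo ⟨h1, h2⟩
    exact hti (key a haA haIoo.1 haIoo.2)
  have hbounds : t + S ≤ t + s ∧ t + s ≤ t + T :=
    ⟨add_le_add_right hs.1 t, add_le_add_right hs.2 t⟩
  have hends : t + s = t + S ∨ t + s = t + T := by
    rcases not_and_or.mp hnotIoo with h | h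
    · exact Or.inl (le_antisymm (not_lt.mp h) hbounds.1)
    · exact Or.inr (le_antisymm hbounds.2 (not_lt.mp h))
  -- Step D: the endpoint is not interior to `A`.
  have hnotintS : t + S ∉ interior A := by
    intro hint
    apply hti
    have hUopen : IsOpen ((fun t' : ℝ≥0 => t' + S) ⁻¹' interior A) :=
      isOpen_interior.preimage (continuous_id.add continuous_const)
    have hUsub : ((fun t' : ℝ≥0 => t' + S) ⁻¹' interior A) ⊆ D := by
      intro t' ht'
      exact ⟨S, ⟨le_refl S, hST⟩, interior_subset ht'⟩
    exact interior_maximal hUsub hUopen hint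
  have hnotintT : t + T ∉ interior A := by
    intro hint
    apply hti
    have hUopen : IsOpen ((fun t' : ℝ≥0 => t' + T) ⁻¹' interior A) :=
      isOpen_interior.preimage (continuous_id.add continuous_const)
    have hUsub : ((fun t' : ℝ≥0 => t' + T) ⁻¹' interior A) ⊆ D := by
      intro t' ht'
      exact ⟨T, ⟨hST, le_refl T⟩, interior_subset ht'⟩
    exact interior_maximal hUsub hUopen hint
  rcases hends with h | h
  · left; rw [h] at hsc; exact ⟨hsc, hnotintS⟩
  · right; rw [h] at hsc; exact ⟨hsc, hnotintT⟩

/-- on a complete probability space, for a process with measurable marginals,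
a.e. continuous paths and absolutely continuous laws at positive times, and atomic
propositions interpreted by Borel sets with Lebesgue-null boundaries, every formula `φ`
(built with `¬`, `∧`, `◇_{[S,T]}`) admits a product-measurable set `K` such that a.e. section
`K_ω` is closed and Lebesgue-null, each time-section of `K` is `P`-null for `t > 0`, and a.e.
the frontier of the time set `⟦φ⟧_ω` is contained in `K_ω`. -/
theorem stmt_15 {Ω AP : Type*} [MeasurableSpace Ω] (P : Measure Ω) [IsProbabilityMeasure P]
    [P.IsComplete] (X : ℝ≥0 → Ω → ℝ)
    (hXt : ∀ t : ℝ≥0, Measurable fun ω => X t ω)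
    (hcont : ∀ᵐ ω ∂P, Continuous fun t => X t ω)
    (habs : ∀ t : ℝ≥0, 0 < t → P.map (fun ω => X t ω) ≪ (volume : Measure ℝ))
    (V : AP → Set ℝ) (hV : ∀ a, MeasurableSet (V a))
    (hVb : ∀ a, (volume : Measure ℝ) (frontier (V a)) = 0)
    (φ : DForm AP) (hφ : φ.ok) :
    ∃ K : Set (Ω × ℝ≥0), MeasurableSet K ∧
      (∀ᵐ ω ∂P, IsClosed {t : ℝ≥0 | (ω, t) ∈ K}) ∧
      (∀ᵐ ω ∂P, (volume : Measure ℝ) ((fun u : ℝ≥0 => (u : ℝ)) '' {t : ℝ≥0 | (ω, t) ∈ K}) = 0) ∧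
      (∀ t : ℝ≥0, 0 < t → P {ω | (ω, t) ∈ K} = 0) ∧
      (∀ᵐ ω ∂P, frontier {t : ℝ≥0 | φ.Sat X V ω t} ⊆ {t : ℝ≥0 | (ω, t) ∈ K}) := by
  classical
  -- A measurable null set outside of which paths are continuous.
  set N : Set Ω := toMeasurable P {ω | ¬ Continuous fun t => X t ω} with hNdef
  have hNm : MeasurableSet N := measurableSet_toMeasurable _ _
  have hNnull : P N = 0 := by
    rw [hNdef, measure_toMeasurable]
    exact ae_iff.mp hcont
  have hNsub : ∀ ω, ω ∉ N → Continuous fun t => X t ω := by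
    intro ω h
    by_contra hc
    exact h (subset_toMeasurable _ _ hc)
  -- A modification with everywhere-continuous paths.
  set Y : ℝ≥0 → Ω → ℝ := fun t ω => if ω ∈ N then 0 else X t ω with hYdef
  have hpath : ∀ ω, ω ∉ N → ∀ t, X t ω = Y t ω := by
    intro ω h t; simp [hYdef, h]
  have hYcont : ∀ ω, Continuous fun t => Y t ω := by
    intro ω
    by_cases h : ω ∈ N
    · simp only [hYdef, if_pos h]; exact continuous_const
    · simp only [hYdef, if_neg h]; exact hNsub ω h
  have hYt : ∀ t, StronglyMeasurable (Y t) := by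
    intro t
    exact (Measurable.ite hNm measurable_const (hXt t)).stronglyMeasurable
  have hjoint : Measurable fun p : Ω × ℝ≥0 => Y p.2 p.1 := by
    have h := stronglyMeasurable_uncurry_of_continuous_of_stronglyMeasurable
      (u := Y) hYcont hYt
    exact h.measurable.comp measurable_swap
  -- Null time-slices for `Y` in Lebesgue-null target sets.
  have hslice : ∀ (F : Set ℝ), MeasurableSet F → (volume : Measure ℝ) F = 0 →
      ∀ t : ℝ≥0, 0 < t → P {ω | Y t ω ∈ F} = 0 := by
    intro F hF hF0 t ht
    have h1 : P {ω | X t ω ∈ F} = 0 := by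
      have h2 := habs t ht hF0
      rwa [Measure.map_apply (hXt t) hF] at h2
    refine measure_mono_null (fun ω hω => ?_) (measure_union_null hNnull h1)
    by_cases h : ω ∈ N
    · exact Or.inl h
    · right; simpa [hYdef, h] using hω
  -- Main induction on the formula.
  have main : ∀ ψ : DForm AP, ψ.ok →
      ∃ K : Set (Ω × ℝ≥0), MeasurableSet K ∧
        (∀ ω, IsClosed {t : ℝ≥0 | (ω, t) ∈ K}) ∧
        (∀ t : ℝ≥0, 0 < t → P {ω | (ω, t) ∈ K} = 0) ∧
        (∀ ω, frontier {t : ℝ≥0 | ψ.Sat Y V ω t} ⊆ {t : ℝ≥0 | (ω, t) ∈ K}) := by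
    intro ψ
    induction ψ with
    | atom a =>
        intro _
        refine ⟨(fun p : Ω × ℝ≥0 => Y p.2 p.1) ⁻¹' frontier (V a),
          hjoint isClosed_frontier.measurableSet, ?_, ?_, ?_⟩
        · intro ω
          exact isClosed_frontier.preimage (hYcont ω)
        · intro t ht
          exact hslice _ isClosed_frontier.measurableSet (hVb a) t ht
        · intro ω
          have heq : {t : ℝ≥0 | DForm.Sat Y V (DForm.atom a) ω t} =
              (fun t => Y t ω) ⁻¹' (V a) := rfl
          rw [heq]
          exact (hYcont ω).frontier_preimage_subset (V a)
    | not ψ ih =>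
        intro h
        obtain ⟨K, h1, h2, h3, h4⟩ := ih h
        refine ⟨K, h1, h2, h3, fun ω => ?_⟩
        have heq : {t : ℝ≥0 | DForm.Sat Y V (DForm.not ψ) ω t} =
            {t : ℝ≥0 | DForm.Sat Y V ψ ω t}ᶜ := rfl
        rw [heq, frontier_compl]
        exact h4 ω
    | and ψ χ ih1 ih2 =>
        intro h
        obtain ⟨K1, h11, h12, h13, h14⟩ := ih1 h.1
        obtain ⟨K2, h21, h22, h23, h24⟩ := ih2 h.2
        refine ⟨K1 ∪ K2, h11.union h21, ?_, ?_, ?_⟩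
        · intro ω
          exact (h12 ω).union (h22 ω)
        · intro t ht
          exact measure_union_null (h13 t ht) (h23 t ht)
        · intro ω u hu
          have heq : {t : ℝ≥0 | DForm.Sat Y V (DForm.and ψ χ) ω t} =
              {t : ℝ≥0 | DForm.Sat Y V ψ ω t} ∩ {t : ℝ≥0 | DForm.Sat Y V χ ω t} := rfl
          rw [heq] at hu
          rcases frontier_inter_subset _ _ hu with h' | h'
          · exact Or.inl (h14 ω h'.1)
          · exact Or.inr (h24 ω h'.2)
    | dia S T ψ ih =>
        intro h
        obtain ⟨K, h1, h2, h3, h4⟩ := ih h.2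
        refine ⟨{p : Ω × ℝ≥0 | (p.1, p.2 + S) ∈ K} ∪ {p : Ω × ℝ≥0 | (p.1, p.2 + T) ∈ K},
          ?_, ?_, ?_, ?_⟩
        · refine MeasurableSet.union ?_ ?_
          · exact h1.preimage (measurable_fst.prodMk (measurable_snd.add_const S))
          · exact h1.preimage (measurable_fst.prodMk (measurable_snd.add_const T))
        · intro ω
          have heq : {t : ℝ≥0 | (ω, t) ∈
              ({p : Ω × ℝ≥0 | (p.1, p.2 + S) ∈ K} ∪ {p : Ω × ℝ≥0 | (p.1, p.2 + T) ∈ K})} =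
              ((fun t : ℝ≥0 => t + S) ⁻¹' {t | (ω, t) ∈ K}) ∪
                ((fun t : ℝ≥0 => t + T) ⁻¹' {t | (ω, t) ∈ K}) := rfl
          rw [heq]
          exact ((h2 ω).preimage (continuous_id.add continuous_const)).union
            ((h2 ω).preimage (continuous_id.add continuous_const))
        · intro t ht
          refine measure_union_null (h3 (t + S) ?_) (h3 (t + T) ?_)
          · exact lt_of_lt_of_le ht le_self_add
          · exact lt_of_lt_of_le ht le_self_add
        · intro ω u hu
          have heq : {t : ℝ≥0 | DForm.Sat Y V (DForm.dia S T ψ) ω t} =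
              {t : ℝ≥0 | ∃ s ∈ Set.Icc S T, t + s ∈ {r : ℝ≥0 | DForm.Sat Y V ψ ω r}} := rfl
          rw [heq] at hu
          rcases dia_frontier_subset _ S T h.1.le hu with h' | h'
          · exact Or.inl (h4 ω h')
          · exact Or.inr (h4 ω h')
  obtain ⟨K, hK, hKcl, hKsl, hKfr⟩ := main φ hφ
  have haeN : ∀ᵐ ω ∂P, ω ∉ N := by
    rw [ae_iff]
    simpa using hNnull
  refine ⟨K, hK, Filter.Eventually.of_forall hKcl, ?_, hKsl, ?_⟩
  · -- a.e. null sections, via Fubini on `Ω × ℝ`.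
    set Kt : Set (Ω × ℝ) := {p : Ω × ℝ | 0 ≤ p.2 ∧ (p.1, Real.toNNReal p.2) ∈ K} with hKt
    have hKtm : MeasurableSet Kt := by
      refine MeasurableSet.inter ?_ ?_
      · exact measurable_snd measurableSet_Ici
      · exact hK.preimage (measurable_fst.prodMk (measurable_real_toNNReal.comp measurable_snd))
    have hzero : (P.prod (volume : Measure ℝ)) Kt = 0 := by
      rw [Measure.prod_apply_symm hKtm]
      have hae : ∀ᵐ x ∂(volume : Measure ℝ), P ((fun ω => (ω, x)) ⁻¹' Kt) = 0 := by
        have hx0 : ∀ᵐ x ∂(volume : Measure ℝ), x ≠ 0 := by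
          rw [ae_iff]
          simpa using Real.volume_singleton (x := 0)
        filter_upwards [hx0] with x hx
        rcases lt_or_gt_of_ne hx with hneg | hpos
        · have : (fun ω => (ω, x)) ⁻¹' Kt = ∅ := by
            ext ω; simp [hKt, not_le.mpr hneg]
          rw [this]; exact measure_empty
        · have hsub : (fun ω => (ω, x)) ⁻¹' Kt ⊆ {ω | (ω, Real.toNNReal x) ∈ K} := by
            intro ω hω; exact hω.2
          exact measure_mono_null hsub (hKsl _ (Real.toNNReal_pos.mpr hpos))
      calc ∫⁻ x, P ((fun ω => (ω, x)) ⁻¹' Kt) ∂(volume : Measure ℝ)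
          = ∫⁻ _, 0 ∂(volume : Measure ℝ) := lintegral_congr_ae hae
        _ = 0 := lintegral_zero
    rw [Measure.prod_apply hKtm,
      lintegral_eq_zero_iff (measurable_measure_prodMk_left hKtm)] at hzero
    filter_upwards [hzero] with ω hω
    have himg : (fun u : ℝ≥0 => (u : ℝ)) '' {t : ℝ≥0 | (ω, t) ∈ K} = Prod.mk ω ⁻¹' Kt := by
      ext x
      constructor
      · rintro ⟨u, hu, rfl⟩
        exact ⟨u.2, by simpa [Real.toNNReal_coe] using hu⟩
      · rintro ⟨hx0, hmem⟩
        exact ⟨Real.toNNReal x, hmem, Real.coe_toNNReal x hx0⟩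
    rw [himg]
    exact hω
  · filter_upwards [haeN] with ω hω
    have heq : {t : ℝ≥0 | φ.Sat X V ω t} = {t : ℝ≥0 | φ.Sat Y V ω t} := by
      ext t
      exact DForm.sat_congr X Y V ω (hpath ω hω) φ t
    rw [heq]
    exact hKfr ω
end

section
/- Let (Ω,F,P) be a complete probability space and X : [0,∞) → Ω → ℝ a process such that each X_t is F-measurable and there is a P-null set off which: the path t ↦ X_t(ω) is continuous, for every c ∈ {x₁,y₁,…,x_k,y_k} the level set {t : X_t(ω) = c} has no isolated points, and every local maximum and local minimum of the path is strict. Assume further that for every t ∈ (0,∞) the law of X_t is absolutely continuous with respect to Lebesgue measure. Let B := ⋃_{i=1}^k I_i where the I_i are intervals with endpoints x_i < y_i, (x_i,y_i) ⊆ I_i ⊆ [x_i,y_i], and pairwise disjoint closures; let I ⊆ [0,∞) be an interval with (S,T) ⊆ I ⊆ [S,T] for some reals 0 ≤ S < T. Then for every t ∈ [0,∞): (a) for P-a.e. ω there is N such that for all n ≥ N, (∃ s ∈ I ∩ ℕ/n, X_{⌊nt⌋/n + s}(ω) ∈ B) ⟺ (∃ s ∈ I, X_{t+s}(ω) ∈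 B), and likewise with ∃ replaced by ∀; (b) the sets {ω : ∃ s ∈ I, X_{t+s}(ω) ∈ B} and {ω : ∀ s ∈ I, X_{t+s}(ω) ∈ B} are F-measurable, and P({ω : ∃ s ∈ I ∩ ℕ/n, X_{⌊nt⌋/n+s}(ω) ∈ B}) → P({ω : ∃ s ∈ I, X_{t+s}(ω) ∈ B}) and P({ω : ∀ s ∈ I ∩ ℕ/n, X_{⌊nt⌋/n+s}(ω) ∈ B}) → P({ω : ∀ s ∈ I, X_{t+s}(ω) ∈ B}) as n → ∞. -/
open MeasureTheory Filter
open scoped NNReal ENNReal Topology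

/-- The grid `ℕ/n = {k/n : k ∈ ℕ}` inside `[0,∞)`. -/
def grid (n : ℕ) : Set ℝ≥0 := {t | ∃ k : ℕ, t = (k : ℝ≥0) / (n : ℝ≥0)}

/-- `Λ_n(t) := ⌊nt⌋/n`. -/
noncomputable def Lam (n : ℕ) (t : ℝ≥0) : ℝ≥0 := (⌊(n : ℝ≥0) * t⌋₊ : ℝ≥0) / (n : ℝ≥0)

/-- `t` is a point of local maximum of `f : [0,∞) → ℝ`. -/
def IsLocMaxPt (f : ℝ≥0 → ℝ) (t : ℝ≥0) : Prop :=
  ∃ δ : ℝ≥0, 0 < δ ∧ ∀ s, t - δ ≤ s → s ≤ t + δ → f s ≤ f t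

/-- `t` is a point of strict local maximum of `f`. -/
def IsStrictLocMaxPt (f : ℝ≥0 → ℝ) (t : ℝ≥0) : Prop :=
  ∃ δ : ℝ≥0, 0 < δ ∧ ∀ s, t - δ ≤ s → s ≤ t + δ → s ≠ t → f s < f t

/-- `t` is a point of local minimum of `f`. -/
def IsLocMinPt (f : ℝ≥0 → ℝ) (t : ℝ≥0) : Prop :=
  ∃ δ : ℝ≥0, 0 < δ ∧ ∀ s, t - δ ≤ s → s ≤ t + δ → f t ≤ f s

/-- `t` is a point of strict local minimum of `f`. -/
def IsStrictLocMinPt (f : ℝ≥0 → ℝ) (t : ℝ≥0) : Prop :=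
  ∃ δ : ℝ≥0, 0 < δ ∧ ∀ s, t - δ ≤ s → s ≤ t + δ → s ≠ t → f t < f s

section Stmt16Helpers
open Set

lemma lam_le (n : ℕ) (t : ℝ≥0) : Lam n t ≤ t := by
  rcases Nat.eq_zero_or_pos n with h | h
  · simp [Lam, h]
  · rw [Lam, div_le_iff₀ (by exact_mod_cast h : (0:ℝ≥0) < n)]
    rw [mul_comm]
    exact Nat.floor_le zero_le

lemma le_lam_add (n : ℕ) (hn : 1 ≤ n) (t : ℝ≥0) : t ≤ Lam n t + 1 / n := by
  have hn' : (n:ℝ≥0) ≠ 0 := by exact_mod_cast (Nat.one_le_iff_ne_zero.mp hn)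
  have h := (Nat.lt_floor_add_one ((n:ℝ≥0) * t)).le
  rw [Lam, ← add_div]
  rw [le_div_iff₀ (pos_iff_ne_zero.mpr hn')]
  calc t * n = (n:ℝ≥0) * t := by ring
  _ ≤ (⌊(n : ℝ≥0) * t⌋₊ : ℝ≥0) + 1 := h

lemma lam_zero (n : ℕ) : Lam n 0 = 0 := by simp [Lam]

lemma lam_lt_of_ne (n : ℕ) (t : ℝ≥0) (h : Lam n t ≠ t) : Lam n t < t :=
  lt_of_le_of_ne (lam_le n t) h

lemma eventually_inv_lt {c : ℝ} (hc : 0 < c) : ∀ᶠ n : ℕ in atTop, ((n:ℝ))⁻¹ < c :=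
  tendsto_inv_atTop_nhds_zero_nat.eventually_lt_const hc

lemma grid_hit (t S T : ℝ≥0) (a b : ℝ≥0) (ha : t + S ≤ a) (hab : a < b) (hb : b < t + T) :
    ∀ᶠ n : ℕ in atTop, ∃ s : ℝ≥0, s ∈ grid n ∧ S < s ∧ s < T ∧
      a < Lam n t + s ∧ Lam n t + s < b := by
  have h1 : (0:ℝ) < (b:ℝ) - a := by
    have := (NNReal.coe_lt_coe).mpr hab; linarith
  have h2 : (0:ℝ) < ((t:ℝ) + T) - b := by
    have := (NNReal.coe_lt_coe).mpr hb; push_cast at this ⊢; linarith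
  filter_upwards [eventually_ge_atTop 1, eventually_inv_lt h1, eventually_inv_lt h2]
    with n hn h1n h2n
  have hn0 : (n:ℝ≥0) ≠ 0 := by exact_mod_cast (Nat.one_le_iff_ne_zero.mp hn)
  have hn0' : (0:ℝ) < n := by exact_mod_cast hn
  have hnn : (0:ℝ≥0) < n := by exact_mod_cast hn
  obtain ⟨j, hj⟩ : ∃ j : ℕ, j = ⌊(n : ℝ≥0) * a⌋₊ + 1 := ⟨_, rfl⟩
  obtain ⟨m, hm⟩ : ∃ m : ℕ, m = ⌊(n : ℝ≥0) * t⌋₊ := ⟨_, rfl⟩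
  have hja : a < (j:ℝ≥0) / n := by
    rw [lt_div_iff₀ hnn, mul_comm, hj]
    exact_mod_cast Nat.lt_floor_add_one ((n : ℝ≥0) * a)
  have h3 : (j:ℝ) ≤ (n:ℝ) * a + 1 := by
    have h4 := (NNReal.coe_le_coe).mpr (Nat.floor_le (zero_le : (0:ℝ≥0) ≤ (n : ℝ≥0) * a))
    rw [hj]; push_cast at h4 ⊢; linarith
  have hjb : (j:ℝ≥0) / n < b := by
    have h5 : ((j:ℝ≥0)/(n:ℝ≥0) : ℝ) < (b:ℝ) := by
      have e1 : ((j:ℝ≥0):ℝ) = (j:ℝ) := by norm_cast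
      have e2 : (((n:ℕ):ℝ≥0):ℝ) = (n:ℝ) := by norm_cast
      rw [e1, e2, div_lt_iff₀ hn0']
      nlinarith [h1n, mul_inv_cancel₀ hn0'.ne', h3]
    exact_mod_cast h5
  have hLam : Lam n t = (m:ℝ≥0) / n := by rw [Lam, hm]
  have hlt : Lam n t < (j:ℝ≥0)/n :=
    lt_of_le_of_lt (le_trans (lam_le n t) (le_trans (le_add_right le_rfl) ha)) hja
  have hmj : m < j := by
    by_contra hc
    push_neg at hc
    have hle' : (j:ℝ≥0) ≤ (m:ℝ≥0) := by exact_mod_cast hc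
    have hle : (j:ℝ≥0)/n ≤ (m:ℝ≥0)/n := by gcongr
    rw [hLam] at hlt
    exact absurd (lt_of_lt_of_le hlt hle) (lt_irrefl _)
  have key : Lam n t + ((j - m : ℕ) : ℝ≥0) / n = (j:ℝ≥0)/n := by
    rw [hLam, ← add_div, ← Nat.cast_add, Nat.add_sub_cancel' hmj.le]
  refine ⟨((j - m : ℕ) : ℝ≥0) / n, ⟨j - m, rfl⟩, ?_, ?_, ?_, ?_⟩
  · have h6 : Lam n t + S < Lam n t + ((j - m : ℕ) : ℝ≥0) / n := by
      rw [key]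
      exact lt_of_le_of_lt (le_trans (add_le_add_left (lam_le n t) S) ha) hja
    exact lt_of_add_lt_add_left h6
  · have hbT : b < Lam n t + T := by
      rw [← NNReal.coe_lt_coe]
      have h7 := (NNReal.coe_le_coe).mpr (le_lam_add n hn t)
      push_cast at h7 ⊢
      rw [one_div] at h7
      linarith
    have h8 : Lam n t + ((j - m : ℕ) : ℝ≥0) / n < Lam n t + T := by
      rw [key]; exact lt_trans hjb hbT
    exact lt_of_add_lt_add_left h8
  · rw [key]; exact hja
  · rw [key]; exact hjb

lemma gap_above {k : ℕ} (x y : Fin k → ℝ) (hxy : ∀ i, x i < y i)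
    (hdisj : ∀ i j, i ≠ j → Set.Icc (x i) (y i) ∩ Set.Icc (x j) (y j) = ∅) (i : Fin k) :
    ∃ η : ℝ, 0 < η ∧ ∀ z : ℝ, y i < z → z < y i + η → ∀ j, z ∉ Set.Icc (x j) (y j) := by
  have hne : (Finset.univ : Finset (Fin k)).Nonempty := ⟨i, Finset.mem_univ i⟩
  set g : Fin k → ℝ := fun j => if y i < x j then x j - y i else 1 with hg
  refine ⟨Finset.univ.inf' hne g, ?_, ?_⟩
  · rw [Finset.lt_inf'_iff]
    intro j _
    by_cases h : y i < x j <;> simp [hg, h] <;> linarith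
  · rintro z hz1 hz2 j ⟨hj1, hj2⟩
    have hgj : Finset.univ.inf' hne g ≤ g j := Finset.inf'_le _ (Finset.mem_univ j)
    by_cases h : y i < x j
    · have : g j = x j - y i := by simp [hg, h]
      rw [this] at hgj
      linarith
    · push_neg at h
      have hymem : y i ∈ Set.Icc (x j) (y j) := ⟨h, le_trans hz1.le hj2⟩
      have hij : j = i := by
        by_contra hne'
        have hd := hdisj i j (fun hh => hne' hh.symm)
        have hmem : y i ∈ Set.Icc (x i) (y i) ∩ Set.Icc (x j) (y j) :=
          ⟨⟨(hxy i).le, le_rfl⟩, hymem⟩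
        rw [hd] at hmem
        exact hmem
      rw [hij] at hj2
      linarith
lemma gap_below {k : ℕ} (x y : Fin k → ℝ) (hxy : ∀ i, x i < y i)
    (hdisj : ∀ i j, i ≠ j → Set.Icc (x i) (y i) ∩ Set.Icc (x j) (y j) = ∅) (i : Fin k) :
    ∃ η : ℝ, 0 < η ∧ ∀ z : ℝ, x i - η < z → z < x i → ∀ j, z ∉ Set.Icc (x j) (y j) := by
  have hne : (Finset.univ : Finset (Fin k)).Nonempty := ⟨i, Finset.mem_univ i⟩
  set g : Fin k → ℝ := fun j => if y j < x i then x i - y j else 1 with hg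
  refine ⟨Finset.univ.inf' hne g, ?_, ?_⟩
  · rw [Finset.lt_inf'_iff]
    intro j _
    by_cases h : y j < x i <;> simp [hg, h] <;> linarith
  · rintro z hz1 hz2 j ⟨hj1, hj2⟩
    have hgj : Finset.univ.inf' hne g ≤ g j := Finset.inf'_le _ (Finset.mem_univ j)
    by_cases h : y j < x i
    · have : g j = x i - y j := by simp [hg, h]
      rw [this] at hgj
      linarith
    · push_neg at h
      have hxmem : x i ∈ Set.Icc (x j) (y j) := ⟨le_trans hj1 hz2.le, h⟩
      have hij : j = i := by
        by_contra hne'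
        have hd := hdisj i j (fun hh => hne' hh.symm)
        have hmem : x i ∈ Set.Icc (x i) (y i) ∩ Set.Icc (x j) (y j) :=
          ⟨⟨le_rfl, (hxy i).le⟩, hxmem⟩
        rw [hd] at hmem
        exact hmem
      rw [hij] at hj1
      linarith

lemma ball_subset_between {u : ℝ≥0} {δ : ℝ≥0} (v : ℝ≥0) (hv : v ∈ Metric.ball u (δ:ℝ)) :
    u - δ ≤ v ∧ v ≤ u + δ := by
  rw [Metric.mem_ball, NNReal.dist_eq, abs_lt] at hv
  constructor
  · rw [tsub_le_iff_right]
    rw [← NNReal.coe_le_coe]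
    push_cast
    linarith [hv.1]
  · rw [← NNReal.coe_le_coe]
    push_cast
    linarith [hv.2]

lemma not_locMin_of_acc (f : ℝ≥0 → ℝ) (u : ℝ≥0)
    (hacc : 𝓝[{v : ℝ≥0 | f v = f u} \ {u}] u ≠ ⊥)
    (hmin : IsLocMinPt f u → IsStrictLocMinPt f u) : ¬ IsLocMinPt f u := by
  intro h
  obtain ⟨δ, hδ, hs⟩ := hmin h
  have hne : (𝓝[{v : ℝ≥0 | f v = f u} \ {u}] u).NeBot := ⟨hacc⟩
  have hball : Metric.ball u (δ:ℝ) ∈ 𝓝[{v : ℝ≥0 | f v = f u} \ {u}] u :=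
    nhdsWithin_le_nhds (Metric.ball_mem_nhds u (by exact_mod_cast hδ))
  obtain ⟨v, hv1, hv2⟩ := Filter.nonempty_of_mem (Filter.inter_mem hball self_mem_nhdsWithin)
  obtain ⟨hb1, hb2⟩ := ball_subset_between v hv1
  exact (ne_of_gt (hs v hb1 hb2 hv2.2)) hv2.1

lemma not_locMax_of_acc (f : ℝ≥0 → ℝ) (u : ℝ≥0)
    (hacc : 𝓝[{v : ℝ≥0 | f v = f u} \ {u}] u ≠ ⊥)
    (hmax : IsLocMaxPt f u → IsStrictLocMaxPt f u) : ¬ IsLocMaxPt f u := by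
  intro h
  obtain ⟨δ, hδ, hs⟩ := hmax h
  have hne : (𝓝[{v : ℝ≥0 | f v = f u} \ {u}] u).NeBot := ⟨hacc⟩
  have hball : Metric.ball u (δ:ℝ) ∈ 𝓝[{v : ℝ≥0 | f v = f u} \ {u}] u :=
    nhdsWithin_le_nhds (Metric.ball_mem_nhds u (by exact_mod_cast hδ))
  obtain ⟨v, hv1, hv2⟩ := Filter.nonempty_of_mem (Filter.inter_mem hball self_mem_nhdsWithin)
  obtain ⟨hb1, hb2⟩ := ball_subset_between v hv1
  exact (ne_of_lt (hs v hb1 hb2 hv2.2)) hv2.1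

lemma exists_near_lt (f : ℝ≥0 → ℝ) (hf : Continuous f) (u : ℝ≥0)
    (h : ¬ IsLocMinPt f u) (δ : ℝ≥0) (hδ : 0 < δ) (η : ℝ) (hη : 0 < η) :
    ∃ v : ℝ≥0, u - δ ≤ v ∧ v ≤ u + δ ∧ f u - η < f v ∧ f v < f u := by
  rw [IsLocMinPt] at h
  push_neg at h
  obtain ⟨s, hs1, hs2, hs3⟩ := h δ hδ
  set z : ℝ := (max (f u - η) (f s) + f u) / 2 with hz
  have hz1 : z < f u := by
    have : max (f u - η) (f s) < f u := max_lt (by linarith) hs3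
    rw [hz]; linarith
  have hz2 : f s ≤ z := by
    have : f s ≤ max (f u - η) (f s) := le_max_right _ _
    rw [hz]; linarith [le_max_right (f u - η) (f s)]
  have hz3 : f u - η < z := by
    rw [hz]; linarith [le_max_left (f u - η) (f s)]
  have hmem : z ∈ Set.Icc (f s) (f u) := ⟨hz2, hz1.le⟩
  rcases le_total s u with hsu | hsu
  · obtain ⟨v, hv, hfv⟩ := intermediate_value_Icc hsu hf.continuousOn hmem
    exact ⟨v, le_trans hs1 hv.1, le_trans hv.2 (le_add_right le_rfl),
      by rw [hfv]; exact hz3, by rw [hfv]; exact hz1⟩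
  · obtain ⟨v, hv, hfv⟩ := intermediate_value_Icc' hsu hf.continuousOn hmem
    exact ⟨v, le_trans tsub_le_self hv.1, le_trans hv.2 hs2,
      by rw [hfv]; exact hz3, by rw [hfv]; exact hz1⟩

lemma exists_near_gt (f : ℝ≥0 → ℝ) (hf : Continuous f) (u : ℝ≥0)
    (h : ¬ IsLocMaxPt f u) (δ : ℝ≥0) (hδ : 0 < δ) (η : ℝ) (hη : 0 < η) :
    ∃ v : ℝ≥0, u - δ ≤ v ∧ v ≤ u + δ ∧ f u < f v ∧ f v < f u + η := by
  rw [IsLocMaxPt] at h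
  push_neg at h
  obtain ⟨s, hs1, hs2, hs3⟩ := h δ hδ
  set z : ℝ := (min (f u + η) (f s) + f u) / 2 with hz
  have hz1 : f u < z := by
    have : f u < min (f u + η) (f s) := lt_min (by linarith) hs3
    rw [hz]; linarith
  have hz2 : z ≤ f s := by
    rw [hz]; linarith [min_le_right (f u + η) (f s)]
  have hz3 : z < f u + η := by
    rw [hz]; linarith [min_le_left (f u + η) (f s)]
  have hmem : z ∈ Set.Icc (f u) (f s) := ⟨hz1.le, hz2⟩
  rcases le_total s u with hsu | hsu
  · obtain ⟨v, hv, hfv⟩ := intermediate_value_Icc' hsu hf.continuousOn hmem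
    exact ⟨v, le_trans hs1 hv.1, le_trans hv.2 (le_add_right le_rfl),
      by rw [hfv]; exact hz1, by rw [hfv]; exact hz3⟩
  · obtain ⟨v, hv, hfv⟩ := intermediate_value_Icc hsu hf.continuousOn hmem
    exact ⟨v, le_trans tsub_le_self hv.1, le_trans hv.2 hs2,
      by rw [hfv]; exact hz1, by rw [hfv]; exact hz3⟩

lemma window_nbhd (S T t : ℝ≥0) (hST : S < T) (u : ℝ≥0) (huT : u < t + T)
    (hl : t + S < u ∨ (u = 0 ∧ t + S = 0)) :
    ∃ δ : ℝ≥0, 0 < δ ∧ ∀ v, u - δ ≤ v → v ≤ u + δ → v ≠ u →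
      t + S < v ∧ v < t + T := by
  rcases hl with hl | ⟨hu0, hS0⟩
  · have hl' : (t:ℝ) + S < u := by
      have := (NNReal.coe_lt_coe).mpr hl; push_cast at this; linarith
    have huT' : (u:ℝ) < t + T := by
      have := (NNReal.coe_lt_coe).mpr huT; push_cast at this; linarith
    set r : ℝ := (min ((u:ℝ) - (t + S)) ((t:ℝ) + T - u)) / 2 with hr
    have hrpos : 0 < r := by
      rw [hr]; apply div_pos (lt_min (by linarith) (by linarith)) two_pos
    refine ⟨Real.toNNReal r, by simpa using hrpos, ?_⟩
    intro v hv1 hv2 _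
    have hcoe : ((Real.toNNReal r : ℝ≥0) : ℝ) = r := Real.coe_toNNReal r hrpos.le
    have hv1' : (u:ℝ) ≤ v + r := by
      have := (NNReal.coe_le_coe).mpr (tsub_le_iff_right.mp hv1)
      push_cast at this; rw [hcoe] at this; linarith
    have hv2' : (v:ℝ) ≤ u + r := by
      have := (NNReal.coe_le_coe).mpr hv2
      push_cast at this; rw [hcoe] at this; linarith
    have hm1 : r ≤ ((u:ℝ) - (t + S)) / 2 := by
      rw [hr]; gcongr; exact min_le_left _ _
    have hm2 : r ≤ ((t:ℝ) + T - u) / 2 := by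
      rw [hr]; gcongr; exact min_le_right _ _
    constructor
    · rw [← NNReal.coe_lt_coe]; push_cast; linarith
    · rw [← NNReal.coe_lt_coe]; push_cast; linarith
  · have hTpos : 0 < t + T := lt_of_le_of_lt (zero_le : (0:ℝ≥0) ≤ u) huT
    refine ⟨(t + T) / 2, by positivity, ?_⟩
    intro v _ hv2 hvne
    constructor
    · rw [hS0]
      exact zero_lt_iff.mpr (by rwa [hu0] at hvne)
    · calc v ≤ u + (t + T)/2 := hv2
        _ = (t + T)/2 := by rw [hu0, zero_add]
        _ < t + T := NNReal.half_lt_self hTpos.ne'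

lemma interior_point (t S T : ℝ≥0) (hST : S < T) (f : ℝ≥0 → ℝ) (hf : Continuous f)
    (O : Set ℝ) (hO : IsOpen O) (u : ℝ≥0) (hu1 : t + S ≤ u) (hu2 : u ≤ t + T)
    (hfu : f u ∈ O) : ∃ v, t + S < v ∧ v < t + T ∧ f v ∈ O := by
  have hwin : t + S < t + T := by exact add_lt_add_right hST t
  have hcl : u ∈ closure (Set.Ioo (t + S) (t + T)) := by
    rw [closure_Ioo hwin.ne]; exact ⟨hu1, hu2⟩
  obtain ⟨v, hvO, hv⟩ := mem_closure_iff.mp hcl _ (hO.preimage hf) hfu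
  exact ⟨v, hv.1, hv.2, hvO⟩

lemma hit_open (t S T : ℝ≥0) (hST : S < T) (I : Set ℝ≥0) (hI₁ : Set.Ioo S T ⊆ I)
    (f : ℝ≥0 → ℝ) (hf : Continuous f) (O : Set ℝ) (hO : IsOpen O)
    (v : ℝ≥0) (hv₁ : t + S < v) (hv₂ : v < t + T) (hfv : f v ∈ O) :
    ∀ᶠ n : ℕ in atTop, ∃ s, s ∈ I ∧ s ∈ grid n ∧ f (Lam n t + s) ∈ O := by
  obtain ⟨ε, hε, hball⟩ := Metric.mem_nhds_iff.mp ((hO.preimage hf).mem_nhds hfv)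
  have hd₁ : (0:ℝ) < (v:ℝ) - (t + S) := by
    have := (NNReal.coe_lt_coe).mpr hv₁; push_cast at this; linarith
  have hd₂ : (0:ℝ) < (t:ℝ) + T - v := by
    have := (NNReal.coe_lt_coe).mpr hv₂; push_cast at this; linarith
  set r : ℝ := min ε (min ((v:ℝ) - (t + S)) ((t:ℝ) + T - v)) / 2 with hr
  have hrpos : 0 < r := by
    rw [hr]; exact div_pos (lt_min hε (lt_min hd₁ hd₂)) two_pos
  have hrε : r < ε := by
    rw [hr]
    have h1 : min ε (min ((v:ℝ) - (t + S)) ((t:ℝ) + T - v)) ≤ ε := min_le_left _ _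
    linarith
  have hX1 : min ε (min ((v:ℝ) - (t + S)) ((t:ℝ) + T - v)) ≤
      min ((v:ℝ) - (t + S)) ((t:ℝ) + T - v) := min_le_right _ _
  have hX2 : min ((v:ℝ) - (t + S)) ((t:ℝ) + T - v) ≤ (v:ℝ) - (t + S) := min_le_left _ _
  have hX3 : min ((v:ℝ) - (t + S)) ((t:ℝ) + T - v) ≤ (t:ℝ) + T - v := min_le_right _ _
  have hrd₁ : r < (v:ℝ) - (t + S) := by rw [hr]; linarith
  have hrd₂ : r < (t:ℝ) + T - v := by rw [hr]; linarith
  set εn : ℝ≥0 := Real.toNNReal r with hεn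
  have hcoe : ((εn : ℝ≥0) : ℝ) = r := Real.coe_toNNReal r hrpos.le
  have hεnv : εn ≤ v := by
    rw [← NNReal.coe_le_coe, hcoe]
    have : (0:ℝ) ≤ (t:ℝ) + S := by positivity
    linarith
  have hacoe : ((v - εn : ℝ≥0) : ℝ) = (v:ℝ) - r := by
    rw [NNReal.coe_sub hεnv, hcoe]
  have ha : t + S ≤ v - εn := by
    rw [← NNReal.coe_le_coe, hacoe]; push_cast; linarith
  have hab : v - εn < v + εn := by
    rw [← NNReal.coe_lt_coe, hacoe]; push_cast [hcoe]; linarith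
  have hb : v + εn < t + T := by
    rw [← NNReal.coe_lt_coe]; push_cast [hcoe]; linarith
  filter_upwards [grid_hit t S T (v - εn) (v + εn) ha hab hb] with n hn
  obtain ⟨s, hgrid, hS, hT, h1, h2⟩ := hn
  refine ⟨s, hI₁ ⟨hS, hT⟩, hgrid, ?_⟩
  apply hball
  rw [Metric.mem_ball, NNReal.dist_eq, abs_lt]
  have c1 := (NNReal.coe_lt_coe).mpr h1
  have c2 := (NNReal.coe_lt_coe).mpr h2
  rw [hacoe] at c1
  push_cast at c1
  push_cast [hcoe] at c2
  constructor <;> push_cast <;> linarith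

theorem main_aux (k : ℕ) (x y : Fin k → ℝ) (J : Fin k → Set ℝ)
    (hxy : ∀ i, x i < y i)
    (hJ : ∀ i, Set.Ioo (x i) (y i) ⊆ J i ∧ J i ⊆ Set.Icc (x i) (y i))
    (hdisj : ∀ i j, i ≠ j → Set.Icc (x i) (y i) ∩ Set.Icc (x j) (y j) = ∅)
    (S T : ℝ≥0) (hST : S < T) (I : Set ℝ≥0)
    (hI₁ : Set.Ioo S T ⊆ I) (hI₂ : I ⊆ Set.Icc S T) (t : ℝ≥0)
    (f : ℝ≥0 → ℝ) (hf : Continuous f)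
    (hlev : ∀ c : ℝ, (∃ i, c = x i ∨ c = y i) → ∀ u : ℝ≥0, f u = c →
      𝓝[{v : ℝ≥0 | f v = c} \ {u}] u ≠ ⊥)
    (hmax : ∀ u, IsLocMaxPt f u → IsStrictLocMaxPt f u)
    (hmin : ∀ u, IsLocMinPt f u → IsStrictLocMinPt f u)
    (hT' : ∀ i, f (t + T) ≠ x i ∧ f (t + T) ≠ y i)
    (hS' : t + S = 0 ∨ ∀ i, f (t + S) ≠ x i ∧ f (t + S) ≠ y i) :
    ∀ᶠ n : ℕ in atTop,
      ((∃ s ∈ I ∩ grid n, f (Lam n t + s) ∈ ⋃ i, J i) ↔ ∃ s ∈ I, f (t + s) ∈ ⋃ i, J i) ∧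
      ((∀ s ∈ I ∩ grid n, f (Lam n t + s) ∈ ⋃ i, J i) ↔ ∀ s ∈ I, f (t + s) ∈ ⋃ i, J i) := by
  classical
  set B : Set ℝ := ⋃ i, J i with hB
  set K : Set ℝ := ⋃ i, Set.Icc (x i) (y i) with hK
  have hKclosed : IsClosed K := isClosed_iUnion_of_finite fun i => isClosed_Icc
  have hKopen : IsOpen Kᶜ := hKclosed.isOpen_compl
  have hBK : B ⊆ K := Set.iUnion_mono fun i => (hJ i).2
  have hwinlt : t + S < t + T := add_lt_add_right hST t
  have hback : ∀ v : ℝ≥0, t + S < v → v < t + T → v - t ∈ I ∧ t + (v - t) = v := by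
    intro v h1 h2
    have htv : t ≤ v := le_trans (le_add_right le_rfl) h1.le
    have heq : t + (v - t) = v := add_tsub_cancel_of_le htv
    refine ⟨hI₁ ⟨?_, ?_⟩, heq⟩
    · rwa [lt_tsub_iff_left]
    · rw [tsub_lt_iff_left htv]; exact h2
  have hIccIoo : ∀ i (z : ℝ), z ∈ Set.Icc (x i) (y i) →
      z = x i ∨ z ∈ Set.Ioo (x i) (y i) ∨ z = y i := by
    intro i z hz
    rcases eq_or_lt_of_le hz.1 with h1 | h1
    · exact Or.inl h1.symm
    · rcases eq_or_lt_of_le hz.2 with h2 | h2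
      · exact Or.inr (Or.inr h2)
      · exact Or.inr (Or.inl ⟨h1, h2⟩)
  have hbnd : ∀ u : ℝ≥0, t + S ≤ u → u ≤ t + T → (∃ i, f u = x i ∨ f u = y i) →
      u < t + T ∧ (t + S < u ∨ (u = 0 ∧ t + S = 0)) := by
    intro u h1 h2 ⟨i, hend⟩
    have huT : u ≠ t + T := by
      intro heq
      rw [heq] at hend
      rcases hend with h | h
      · exact (hT' i).1 h
      · exact (hT' i).2 h
    refine ⟨lt_of_le_of_ne h2 huT, ?_⟩
    rcases lt_or_eq_of_le h1 with h | h
    · exact Or.inl h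
    · rcases hS' with h0 | hse
      · exact Or.inr ⟨by rw [← h, h0], h0⟩
      · exfalso
        rw [← h] at hend
        rcases hend with hh | hh
        · exact (hse i).1 hh
        · exact (hse i).2 hh
  -- boundary: produce interior point of window with value in Ioo (x i) (y i)
  have hbdryIoo : ∀ u : ℝ≥0, t + S ≤ u → u ≤ t + T → ∀ i, (f u = x i ∨ f u = y i) →
      ∃ v, t + S < v ∧ v < t + T ∧ f v ∈ Set.Ioo (x i) (y i) := by
    intro u h1 h2 i hend
    obtain ⟨huT, hul⟩ := hbnd u h1 h2 ⟨i, hend⟩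
    obtain ⟨δ, hδ, hwin⟩ := window_nbhd S T t hST u huT hul
    have hη : (0:ℝ) < y i - x i := by linarith [hxy i]
    rcases hend with hcx | hcy
    · have hnmax := not_locMax_of_acc f u (hlev (f u) ⟨i, Or.inl hcx⟩ u rfl) (hmax u)
      obtain ⟨v, hb1, hb2, hgt, hlt⟩ := exists_near_gt f hf u hnmax δ hδ (y i - x i) hη
      have hvne : v ≠ u := by
        intro h; rw [h] at hgt; exact lt_irrefl _ hgt
      obtain ⟨hw1, hw2⟩ := hwin v hb1 hb2 hvne
      rw [hcx] at hgt hlt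
      exact ⟨v, hw1, hw2, ⟨hgt, by linarith⟩⟩
    · have hnmin := not_locMin_of_acc f u (hlev (f u) ⟨i, Or.inr hcy⟩ u rfl) (hmin u)
      obtain ⟨v, hb1, hb2, hgt, hlt⟩ := exists_near_lt f hf u hnmin δ hδ (y i - x i) hη
      have hvne : v ≠ u := by
        intro h; rw [h] at hlt; exact lt_irrefl _ hlt
      obtain ⟨hw1, hw2⟩ := hwin v hb1 hb2 hvne
      rw [hcy] at hgt hlt
      exact ⟨v, hw1, hw2, ⟨by linarith, hlt⟩⟩
  -- boundary: produce interior point of window with value outside K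
  have hbdryK : ∀ u : ℝ≥0, t + S ≤ u → u ≤ t + T → ∀ i, (f u = x i ∨ f u = y i) →
      ∃ v, t + S < v ∧ v < t + T ∧ f v ∈ Kᶜ := by
    intro u h1 h2 i hend
    obtain ⟨huT, hul⟩ := hbnd u h1 h2 ⟨i, hend⟩
    obtain ⟨δ, hδ, hwin⟩ := window_nbhd S T t hST u huT hul
    rcases hend with hcx | hcy
    · obtain ⟨η, hη, hgap⟩ := gap_below x y hxy hdisj i
      have hnmin := not_locMin_of_acc f u (hlev (f u) ⟨i, Or.inl hcx⟩ u rfl) (hmin u)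
      obtain ⟨v, hb1, hb2, hgt, hlt⟩ := exists_near_lt f hf u hnmin δ hδ η hη
      have hvne : v ≠ u := by
        intro h; rw [h] at hlt; exact lt_irrefl _ hlt
      obtain ⟨hw1, hw2⟩ := hwin v hb1 hb2 hvne
      rw [hcx] at hgt hlt
      refine ⟨v, hw1, hw2, ?_⟩
      intro hmem
      obtain ⟨j, hj⟩ := Set.mem_iUnion.mp hmem
      exact hgap (f v) hgt hlt j hj
    · obtain ⟨η, hη, hgap⟩ := gap_above x y hxy hdisj i
      have hnmax := not_locMax_of_acc f u (hlev (f u) ⟨i, Or.inr hcy⟩ u rfl) (hmax u)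
      obtain ⟨v, hb1, hb2, hgt, hlt⟩ := exists_near_gt f hf u hnmax δ hδ η hη
      have hvne : v ≠ u := by
        intro h; rw [h] at hgt; exact lt_irrefl _ hgt
      obtain ⟨hw1, hw2⟩ := hwin v hb1 hb2 hvne
      rw [hcy] at hgt hlt
      refine ⟨v, hw1, hw2, ?_⟩
      intro hmem
      obtain ⟨j, hj⟩ := Set.mem_iUnion.mp hmem
      exact hgap (f v) hgt hlt j hj
  have hSE : t ≠ 0 → ∀ i, f (t + S) ≠ x i ∧ f (t + S) ≠ y i := by
    intro ht
    rcases hS' with h0 | h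
    · exact absurd (add_eq_zero.mp h0).1 ht
    · exact h
  have hlamt : ∀ n : ℕ, t = 0 → Lam n t = t := by
    intro n ht; rw [ht, lam_zero]
  -- E1
  have E1 : (∃ s ∈ I, f (t + s) ∈ B) → ∀ᶠ n : ℕ in atTop,
      ∃ s ∈ I ∩ grid n, f (Lam n t + s) ∈ B := by
    rintro ⟨s, hsI, hsB⟩
    obtain ⟨hSs, hsT⟩ := hI₂ hsI
    have hu1 : t + S ≤ t + s := add_le_add_right hSs t
    have hu2 : t + s ≤ t + T := add_le_add_right hsT t
    obtain ⟨i, hJi⟩ := Set.mem_iUnion.mp hsB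
    have key : ∃ v, t + S < v ∧ v < t + T ∧ f v ∈ Set.Ioo (x i) (y i) := by
      rcases hIccIoo i _ ((hJ i).2 hJi) with hc | hio | hc
      · exact hbdryIoo (t + s) hu1 hu2 i (Or.inl hc)
      · exact interior_point t S T hST f hf _ isOpen_Ioo (t + s) hu1 hu2 hio
      · exact hbdryIoo (t + s) hu1 hu2 i (Or.inr hc)
    obtain ⟨v, hv1, hv2, hv3⟩ := key
    filter_upwards [hit_open t S T hST I hI₁ f hf _ isOpen_Ioo v hv1 hv2 hv3] with n hn
    obtain ⟨s', hs'I, hs'g, hs'O⟩ := hn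
    exact ⟨s', ⟨hs'I, hs'g⟩, Set.mem_iUnion.mpr ⟨i, (hJ i).1 hs'O⟩⟩
  -- E2
  have E2 : (¬ ∃ s ∈ I, f (t + s) ∈ B) → ∀ᶠ n : ℕ in atTop,
      ¬ ∃ s ∈ I ∩ grid n, f (Lam n t + s) ∈ B := by
    intro hno'
    push_neg at hno'
    by_cases ht : t = 0
    · apply Filter.Eventually.of_forall
      rintro n ⟨s, ⟨hsI, _⟩, hfB⟩
      rw [hlamt n ht] at hfB
      exact hno' s hsI hfB
    · have hse := hSE ht
      have hKS : f (t + S) ∉ K := by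
        intro hmem
        obtain ⟨i, hIcc⟩ := Set.mem_iUnion.mp hmem
        rcases hIccIoo i _ hIcc with hc | hio | hc
        · exact (hse i).1 hc
        · obtain ⟨v, hv1, hv2, hv3⟩ := interior_point t S T hST f hf _ isOpen_Ioo
            (t + S) le_rfl hwinlt.le hio
          obtain ⟨hvI, hveq⟩ := hback v hv1 hv2
          exact hno' _ hvI (by rw [hveq]; exact Set.mem_iUnion.mpr ⟨i, (hJ i).1 hv3⟩)
        · exact (hse i).2 hc
      obtain ⟨ε, hε, hball⟩ := Metric.mem_nhds_iff.mp ((hKopen.preimage hf).mem_nhds hKS)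
      filter_upwards [eventually_ge_atTop 1, eventually_inv_lt hε] with n hn hinv
      rintro ⟨s, ⟨hsI, _⟩, hfB⟩
      by_cases hL : Lam n t = t
      · rw [hL] at hfB; exact hno' s hsI hfB
      · have hLlt : Lam n t < t := lam_lt_of_ne n t hL
        obtain ⟨hSs, hsT⟩ := hI₂ hsI
        have hvT : Lam n t + s < t + T :=
          lt_of_lt_of_le (add_lt_add_left hLlt s) (add_le_add_right hsT t)
        by_cases hvS : t + S < Lam n t + s
        · obtain ⟨hvI, hveq⟩ := hback _ hvS hvT
          exact hno' _ hvI (by rw [hveq]; exact hfB)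
        · push_neg at hvS
          have hmem : (Lam n t + s) ∈ Metric.ball (t + S) ε := by
            rw [Metric.mem_ball, NNReal.dist_eq, abs_lt]
            have c1 := (NNReal.coe_le_coe).mpr hvS
            have c2 := (NNReal.coe_le_coe).mpr (le_lam_add n hn t)
            have c3 := (NNReal.coe_le_coe).mpr (add_le_add_right hSs (Lam n t))
            push_cast at c1 c2 c3
            rw [one_div] at c2
            constructor <;> push_cast <;> [linarith; linarith]
          exact (hball hmem) (hBK hfB)
  -- E3
  have E3 : (∀ s ∈ I, f (t + s) ∈ B) → ∀ᶠ n : ℕ in atTop,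
      ∀ s ∈ I ∩ grid n, f (Lam n t + s) ∈ B := by
    intro hall
    by_cases ht : t = 0
    · apply Filter.Eventually.of_forall
      rintro n s ⟨hsI, _⟩
      rw [hlamt n ht]
      exact hall s hsI
    · have hse := hSE ht
      have himg : f '' (Set.Ioo (t + S) (t + T)) ⊆ K := by
        rintro z ⟨v, hv, rfl⟩
        obtain ⟨hvI, hveq⟩ := hback v hv.1 hv.2
        exact hBK (hveq ▸ hall _ hvI)
      have hKS : f (t + S) ∈ K := by
        have hcl : (t + S) ∈ closure (Set.Ioo (t + S) (t + T)) := by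
          rw [closure_Ioo hwinlt.ne]; exact ⟨le_rfl, hwinlt.le⟩
        have h2 := (hf.continuousWithinAt).mem_closure_image hcl
        have h3 : closure (f '' (Set.Ioo (t + S) (t + T))) ⊆ K := by
          rw [← hKclosed.closure_eq]; exact closure_mono himg
        exact h3 h2
      obtain ⟨i, hIcc⟩ := Set.mem_iUnion.mp hKS
      have hio : f (t + S) ∈ Set.Ioo (x i) (y i) := by
        rcases hIccIoo i _ hIcc with hc | hio | hc
        · exact absurd hc (hse i).1
        · exact hio
        · exact absurd hc (hse i).2
      obtain ⟨ε, hε, hball⟩ := Metric.mem_nhds_iff.mp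
        (((isOpen_Ioo).preimage hf).mem_nhds hio)
      filter_upwards [eventually_ge_atTop 1, eventually_inv_lt hε] with n hn hinv
      rintro s ⟨hsI, _⟩
      by_cases hL : Lam n t = t
      · rw [hL]; exact hall s hsI
      · have hLlt : Lam n t < t := lam_lt_of_ne n t hL
        obtain ⟨hSs, hsT⟩ := hI₂ hsI
        have hvT : Lam n t + s < t + T :=
          lt_of_lt_of_le (add_lt_add_left hLlt s) (add_le_add_right hsT t)
        by_cases hvS : t + S < Lam n t + s
        · obtain ⟨hvI, hveq⟩ := hback _ hvS hvT
          have := hall _ hvI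
          rwa [hveq] at this
        · push_neg at hvS
          have hmem : (Lam n t + s) ∈ Metric.ball (t + S) ε := by
            rw [Metric.mem_ball, NNReal.dist_eq, abs_lt]
            have c1 := (NNReal.coe_le_coe).mpr hvS
            have c2 := (NNReal.coe_le_coe).mpr (le_lam_add n hn t)
            have c3 := (NNReal.coe_le_coe).mpr (add_le_add_right hSs (Lam n t))
            push_cast at c1 c2 c3
            rw [one_div] at c2
            constructor <;> push_cast <;> [linarith; linarith]
          exact Set.mem_iUnion.mpr ⟨i, (hJ i).1 (hball hmem)⟩
  -- E4
  have E4 : (¬ ∀ s ∈ I, f (t + s) ∈ B) → ∀ᶠ n : ℕ in atTop,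
      ¬ ∀ s ∈ I ∩ grid n, f (Lam n t + s) ∈ B := by
    intro hnall
    push_neg at hnall
    obtain ⟨s, hsI, hfB⟩ := hnall
    obtain ⟨hSs, hsT⟩ := hI₂ hsI
    have hu1 : t + S ≤ t + s := add_le_add_right hSs t
    have hu2 : t + s ≤ t + T := add_le_add_right hsT t
    have key : ∃ v, t + S < v ∧ v < t + T ∧ f v ∈ Kᶜ := by
      by_cases hKu : f (t + s) ∈ K
      · obtain ⟨i, hIcc⟩ := Set.mem_iUnion.mp hKu
        rcases hIccIoo i _ hIcc with hc | hio | hc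
        · exact hbdryK (t + s) hu1 hu2 i (Or.inl hc)
        · exact absurd (Set.mem_iUnion.mpr ⟨i, (hJ i).1 hio⟩) hfB
        · exact hbdryK (t + s) hu1 hu2 i (Or.inr hc)
      · exact interior_point t S T hST f hf Kᶜ hKopen (t + s) hu1 hu2 hKu
    obtain ⟨v, hv1, hv2, hv3⟩ := key
    filter_upwards [hit_open t S T hST I hI₁ f hf Kᶜ hKopen v hv1 hv2 hv3] with n hn h
    obtain ⟨s', hs'I, hs'g, hs'O⟩ := hn
    exact hs'O (hBK (h s' ⟨hs'I, hs'g⟩))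
  have hdia : ∀ᶠ n : ℕ in atTop,
      ((∃ s ∈ I ∩ grid n, f (Lam n t + s) ∈ B) ↔ ∃ s ∈ I, f (t + s) ∈ B) := by
    by_cases h : ∃ s ∈ I, f (t + s) ∈ B
    · filter_upwards [E1 h] with n hn; exact iff_of_true hn h
    · filter_upwards [E2 h] with n hn; exact iff_of_false hn h
  have hbox : ∀ᶠ n : ℕ in atTop,
      ((∀ s ∈ I ∩ grid n, f (Lam n t + s) ∈ B) ↔ ∀ s ∈ I, f (t + s) ∈ B) := by
    by_cases h : ∀ s ∈ I, f (t + s) ∈ B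
    · filter_upwards [E3 h] with n hn; exact iff_of_true hn h
    · filter_upwards [E4 h] with n hn; exact iff_of_false hn h
  filter_upwards [hdia, hbox] with n h1 h2
  exact ⟨h1, h2⟩

-- generic tendsto helper
lemma tendsto_measure_of_eventually_iff {Ω : Type*} [MeasurableSpace Ω] (P : Measure Ω)
    [IsProbabilityMeasure P] (D : ℕ → Set Ω) (C : Set Ω)
    (hD : ∀ n, MeasurableSet (D n)) (hC : MeasurableSet C)
    (hae : ∀ᵐ ω ∂P, ∀ᶠ n in atTop, (ω ∈ D n ↔ ω ∈ C)) :
    Tendsto (fun n => P (D n)) atTop (𝓝 (P C)) := by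
  have h := tendsto_lintegral_of_dominated_convergence (μ := P)
    (F := fun n => (D n).indicator (1 : Ω → ℝ≥0∞))
    (f := C.indicator (1 : Ω → ℝ≥0∞)) (bound := 1)
    (fun n => measurable_one.indicator (hD n))
    (fun n => Filter.Eventually.of_forall fun ω => by
      by_cases hω : ω ∈ D n <;> simp [hω])
    (by simp [lintegral_one])
    (by
      filter_upwards [hae] with ω hω
      apply tendsto_const_nhds.congr'
      filter_upwards [hω] with n hn
      by_cases hc : ω ∈ C
      · rw [Set.indicator_of_mem hc, Set.indicator_of_mem (hn.mpr hc)]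
      · rw [Set.indicator_of_notMem hc, Set.indicator_of_notMem (fun hh => hc (hn.mp hh))])
  simpa [lintegral_indicator_one (hD _), lintegral_indicator_one hC] using h

-- measurability via completeness
lemma measurable_of_eventually_iff {Ω : Type*} [MeasurableSpace Ω] (P : Measure Ω)
    [IsProbabilityMeasure P] [P.IsComplete] (D : ℕ → Set Ω) (C : Set Ω)
    (hD : ∀ n, MeasurableSet (D n))
    (hae : ∀ᵐ ω ∂P, ∀ᶠ n in atTop, (ω ∈ D n ↔ ω ∈ C)) :
    MeasurableSet C := by
  set L : Set Ω := ⋃ N : ℕ, ⋂ n : ℕ, ⋂ (_ : N ≤ n), D n with hL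
  have hLmeas : MeasurableSet L :=
    MeasurableSet.iUnion fun N => MeasurableSet.iInter fun n =>
      MeasurableSet.iInter fun _ => hD n
  have heq : L =ᵐ[P] C := by
    rw [Filter.eventuallyEq_set]
    filter_upwards [hae] with ω hω
    obtain ⟨N, hN⟩ := eventually_atTop.mp hω
    constructor
    · intro hωL
      obtain ⟨N', hN'⟩ := Set.mem_iUnion.mp hωL
      simp only [Set.mem_iInter] at hN'
      exact (hN (max N N') (le_max_left _ _)).mp (hN' (max N N') (le_max_right _ _))
    · intro hωC
      apply Set.mem_iUnion.mpr ⟨N, ?_⟩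
      simp only [Set.mem_iInter]
      intro n hn
      exact (hN n hn).mpr hωC
  exact (hLmeas.nullMeasurableSet.congr heq).measurable_of_complete

end Stmt16Helpers

/-- convergence of the discretized semantics of `◇_I p` and `□_I p` to the
continuous semantics, where `p` holds at `s` iff `X_s ∈ B = ⋃ᵢ Iᵢ` (pairwise separated
nondegenerate intervals), both pathwise (eventually, almost every `ω`) and in probability. -/
theorem stmt_16 {Ω : Type*} [MeasurableSpace Ω] (P : Measure Ω) [IsProbabilityMeasure P]
    [P.IsComplete] (X : ℝ≥0 → Ω → ℝ)
    (hXt : ∀ t : ℝ≥0, Measurable fun ω => X t ω)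
    (k : ℕ) (x y : Fin k → ℝ) (J : Fin k → Set ℝ)
    (hxy : ∀ i, x i < y i)
    (hJ : ∀ i, Set.Ioo (x i) (y i) ⊆ J i ∧ J i ⊆ Set.Icc (x i) (y i))
    (hdisj : ∀ i j, i ≠ j → Set.Icc (x i) (y i) ∩ Set.Icc (x j) (y j) = ∅)
    (hgood : ∀ᵐ ω ∂P, Continuous (fun u => X u ω) ∧
      (∀ c : ℝ, (∃ i, c = x i ∨ c = y i) →
        ∀ u : ℝ≥0, X u ω = c → 𝓝[{v : ℝ≥0 | X v ω = c} \ {u}] u ≠ ⊥) ∧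
      (∀ u, IsLocMaxPt (fun v => X v ω) u → IsStrictLocMaxPt (fun v => X v ω) u) ∧
      (∀ u, IsLocMinPt (fun v => X v ω) u → IsStrictLocMinPt (fun v => X v ω) u))
    (habs : ∀ u : ℝ≥0, 0 < u → P.map (fun ω => X u ω) ≪ (volume : Measure ℝ))
    (S T : ℝ≥0) (hST : S < T) (I : Set ℝ≥0)
    (hI₁ : Set.Ioo S T ⊆ I) (hI₂ : I ⊆ Set.Icc S T) (t : ℝ≥0) :
    (∀ᵐ ω ∂P, ∃ N : ℕ, ∀ n ≥ N,
        ((∃ s ∈ I ∩ grid n, X (Lam n t + s) ω ∈ ⋃ i, J i) ↔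
          ∃ s ∈ I, X (t + s) ω ∈ ⋃ i, J i) ∧
        ((∀ s ∈ I ∩ grid n, X (Lam n t + s) ω ∈ ⋃ i, J i) ↔
          ∀ s ∈ I, X (t + s) ω ∈ ⋃ i, J i)) ∧
      MeasurableSet {ω | ∃ s ∈ I, X (t + s) ω ∈ ⋃ i, J i} ∧
      MeasurableSet {ω | ∀ s ∈ I, X (t + s) ω ∈ ⋃ i, J i} ∧
      Tendsto (fun n : ℕ => P {ω | ∃ s ∈ I ∩ grid n, X (Lam n t + s) ω ∈ ⋃ i, J i})
        atTop (𝓝 (P {ω | ∃ s ∈ I, X (t + s) ω ∈ ⋃ i, J i})) ∧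
      Tendsto (fun n : ℕ => P {ω | ∀ s ∈ I ∩ grid n, X (Lam n t + s) ω ∈ ⋃ i, J i})
        atTop (𝓝 (P {ω | ∀ s ∈ I, X (t + s) ω ∈ ⋃ i, J i})) := by
  classical
  have hJmeas : ∀ i, MeasurableSet (J i) := by
    intro i
    have h1 : Set.Ioo (x i) (y i) ∪ (J i \ Set.Ioo (x i) (y i)) = J i :=
      Set.union_diff_cancel (hJ i).1
    rw [← h1]
    apply MeasurableSet.union measurableSet_Ioo
    apply Set.Finite.measurableSet
    apply Set.Finite.subset ((Set.finite_singleton (y i)).insert (x i))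
    rintro z ⟨hz1, hz2⟩
    have h2 := (hJ i).2 hz1
    rcases eq_or_lt_of_le h2.1 with h | h
    · exact Set.mem_insert_iff.mpr (Or.inl h.symm)
    · rcases eq_or_lt_of_le h2.2 with h2' | h2'
      · exact Set.mem_insert_iff.mpr (Or.inr h2')
      · exact absurd ⟨h, h2'⟩ hz2
  have hBmeas : MeasurableSet (⋃ i, J i) := MeasurableSet.iUnion hJmeas
  have hgridc : ∀ n : ℕ, (I ∩ grid n).Countable := by
    intro n
    refine Set.Countable.mono Set.inter_subset_right ?_
    have hsub : grid n ⊆ Set.range (fun k : ℕ => (k : ℝ≥0) / n) := by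
      rintro z ⟨k, hk⟩; exact ⟨k, hk.symm⟩
    exact (Set.countable_range _).mono hsub
  have hDdia : ∀ n : ℕ, MeasurableSet {ω | ∃ s ∈ I ∩ grid n, X (Lam n t + s) ω ∈ ⋃ i, J i} := by
    intro n
    have heq : {ω | ∃ s ∈ I ∩ grid n, X (Lam n t + s) ω ∈ ⋃ i, J i}
        = ⋃ s ∈ I ∩ grid n, (fun ω => X (Lam n t + s) ω) ⁻¹' (⋃ i, J i) := by
      ext ω; simp
    rw [heq]
    exact MeasurableSet.biUnion (hgridc n) fun s _ => (hXt _) hBmeas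
  have hDbox : ∀ n : ℕ, MeasurableSet {ω | ∀ s ∈ I ∩ grid n, X (Lam n t + s) ω ∈ ⋃ i, J i} := by
    intro n
    have heq : {ω | ∀ s ∈ I ∩ grid n, X (Lam n t + s) ω ∈ ⋃ i, J i}
        = ⋂ s ∈ I ∩ grid n, (fun ω => X (Lam n t + s) ω) ⁻¹' (⋃ i, J i) := by
      ext ω; simp
    rw [heq]
    exact MeasurableSet.biInter (hgridc n) fun s _ => (hXt _) hBmeas
  have hexc : ∀ u : ℝ≥0, 0 < u → ∀ᵐ ω ∂P, ∀ i, X u ω ≠ x i ∧ X u ω ≠ y i := by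
    intro u hu
    have hEfin : (⋃ i, ({x i, y i} : Set ℝ)).Finite :=
      Set.finite_iUnion fun i => (Set.finite_singleton (y i)).insert (x i)
    have hEvol : (volume : Measure ℝ) (⋃ i, ({x i, y i} : Set ℝ)) = 0 :=
      hEfin.measure_zero _
    have hmap := habs u hu hEvol
    rw [Measure.map_apply (hXt u) hEfin.measurableSet] at hmap
    rw [ae_iff]
    have hseq : {ω | ¬ ∀ i, X u ω ≠ x i ∧ X u ω ≠ y i}
        = (fun ω => X u ω) ⁻¹' (⋃ i, ({x i, y i} : Set ℝ)) := by
      ext ω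
      simp only [Set.mem_setOf_eq, Set.mem_preimage, Set.mem_iUnion, Set.mem_insert_iff,
      Set.mem_singleton_iff, not_forall, not_and_or, not_not]
    rw [hseq]
    exact hmap
  have hT0 : (0:ℝ≥0) < t + T :=
    lt_of_lt_of_le (lt_of_le_of_lt (zero_le : (0:ℝ≥0) ≤ S) hST) le_add_self
  have haeT := hexc (t + T) hT0
  have haeS : ∀ᵐ ω ∂P, t + S = 0 ∨ ∀ i, X (t + S) ω ≠ x i ∧ X (t + S) ω ≠ y i := by
    by_cases h : t + S = 0
    · exact Filter.Eventually.of_forall fun ω => Or.inl h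
    · exact (hexc (t + S) (zero_lt_iff.mpr h)).mono fun ω h2 => Or.inr h2
  have hae : ∀ᵐ ω ∂P, ∀ᶠ n : ℕ in atTop,
      ((∃ s ∈ I ∩ grid n, X (Lam n t + s) ω ∈ ⋃ i, J i) ↔ ∃ s ∈ I, X (t + s) ω ∈ ⋃ i, J i) ∧
      ((∀ s ∈ I ∩ grid n, X (Lam n t + s) ω ∈ ⋃ i, J i) ↔ ∀ s ∈ I, X (t + s) ω ∈ ⋃ i, J i) := by
    filter_upwards [hgood, haeT, haeS] with ω hg h1 h2
    exact main_aux k x y J hxy hJ hdisj S T hST I hI₁ hI₂ t (fun u => X u ω)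
      hg.1 hg.2.1 hg.2.2.1 hg.2.2.2 h1 h2
  have haedia : ∀ᵐ ω ∂P, ∀ᶠ n : ℕ in atTop,
      (ω ∈ {ω | ∃ s ∈ I ∩ grid n, X (Lam n t + s) ω ∈ ⋃ i, J i} ↔
        ω ∈ {ω | ∃ s ∈ I, X (t + s) ω ∈ ⋃ i, J i}) :=
    hae.mono fun ω h => h.mono fun n hn => hn.1
  have haebox : ∀ᵐ ω ∂P, ∀ᶠ n : ℕ in atTop,
      (ω ∈ {ω | ∀ s ∈ I ∩ grid n, X (Lam n t + s) ω ∈ ⋃ i, J i} ↔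
        ω ∈ {ω | ∀ s ∈ I, X (t + s) ω ∈ ⋃ i, J i}) :=
    hae.mono fun ω h => h.mono fun n hn => hn.2
  have hCdia : MeasurableSet {ω | ∃ s ∈ I, X (t + s) ω ∈ ⋃ i, J i} :=
    measurable_of_eventually_iff P _ _ hDdia haedia
  have hCbox : MeasurableSet {ω | ∀ s ∈ I, X (t + s) ω ∈ ⋃ i, J i} :=
    measurable_of_eventually_iff P _ _ hDbox haebox
  exact ⟨hae.mono fun ω h => eventually_atTop.mp h, hCdia, hCbox,
    tendsto_measure_of_eventually_iff P _ _ hDdia hCdia haedia,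
    tendsto_measure_of_eventually_iff P _ _ hDbox hCbox haebox⟩
end

section
/- Let (Ω,F,P) be a probability space and X : [0,∞) → Ω → ℝ a process such that each X_t is F-measurable, almost every path t ↦ X_t(ω) is continuous, and for every t ∈ (0,∞) the law of X_t is absolutely continuous with respect to Lebesgue measure. Let B ⊆ ℝ be a Borel set whose topological boundary ∂B has Lebesgue measure zero. Then for every t ∈ [0,∞), for P-a.e. ω there exists N such that for all n ≥ N: X_{⌊nt⌋/n}(ω) ∈ B if and only if X_t(ω) ∈ B. -/
open MeasureTheory
open scoped NNReal ENNReal Topology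

lemma lam_coe (n : ℕ) (t : ℝ≥0) : ((Lam n t : ℝ≥0) : ℝ) = (⌊(n : ℝ) * (t : ℝ)⌋₊ : ℝ) / (n : ℝ) := by
  have : ⌊(n : ℝ≥0) * t⌋₊ = ⌊(n : ℝ) * (t : ℝ)⌋₊ := by
    apply le_antisymm
    · exact Nat.le_floor (by exact_mod_cast Nat.floor_le (zero_le : (0 : ℝ≥0) ≤ (n : ℝ≥0) * t))
    · exact Nat.le_floor (by exact_mod_cast Nat.floor_le (by positivity : (0:ℝ) ≤ (n : ℝ) * t))
  simp [Lam, this]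

lemma lam_tendsto (t : ℝ≥0) :
    Filter.Tendsto (fun n : ℕ => Lam n t) Filter.atTop (𝓝 t) := by
  rw [← NNReal.tendsto_coe]
  have h1 : Filter.Tendsto (fun n : ℕ => (t : ℝ) - 1 / n) Filter.atTop (𝓝 (t : ℝ)) := by
    simpa using Filter.Tendsto.const_sub (t : ℝ) tendsto_one_div_atTop_nhds_zero_nat
  apply tendsto_of_tendsto_of_tendsto_of_le_of_le' h1 tendsto_const_nhds
  · filter_upwards [Filter.eventually_ge_atTop 1] with n hn
    rw [lam_coe]
    have hn' : (0 : ℝ) < n := by positivity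
    rw [sub_le_iff_le_add, ← add_div, le_div_iff₀ hn']
    have := Nat.lt_floor_add_one ((n : ℝ) * t)
    nlinarith
  · filter_upwards [Filter.eventually_ge_atTop 1] with n hn
    rw [lam_coe]
    have hn' : (0 : ℝ) < n := by positivity
    rw [div_le_iff₀ hn']
    have := Nat.floor_le (a := (n : ℝ) * t) (by positivity)
    nlinarith

/-- let `X` be a process with measurable marginals, a.e. continuous paths and
absolutely continuous laws at positive times, and let `B ⊆ ℝ` be a Borel set whose boundary
has Lebesgue measure zero. Then for every `t ∈ [0,∞)`, almost surely the truth value of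
`X_{⌊nt⌋/n} ∈ B` eventually agrees with that of `X_t ∈ B`. -/
theorem stmt_18 {Ω : Type*} [MeasurableSpace Ω] (P : Measure Ω) [IsProbabilityMeasure P]
    (X : ℝ≥0 → Ω → ℝ) (hXt : ∀ u : ℝ≥0, Measurable fun ω => X u ω)
    (hcont : ∀ᵐ ω ∂P, Continuous fun u => X u ω)
    (habs : ∀ u : ℝ≥0, 0 < u → P.map (fun ω => X u ω) ≪ (volume : Measure ℝ))
    (B : Set ℝ) (hB : MeasurableSet B) (hfr : (volume : Measure ℝ) (frontier B) = 0)
    (t : ℝ≥0) :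
    ∀ᵐ ω ∂P, ∃ N : ℕ, ∀ n ≥ N, (X (Lam n t) ω ∈ B ↔ X t ω ∈ B) := by
  rcases eq_or_lt_of_le (zero_le : (0 : ℝ≥0) ≤ t) with rfl | ht
  · refine Filter.Eventually.of_forall fun ω => ⟨0, fun n _ => ?_⟩
    simp [Lam]
  · have hfrm : MeasurableSet (frontier B) := isClosed_frontier.measurableSet
    have hmap : (P.map (fun ω => X t ω)) (frontier B) = 0 := habs t ht hfr
    rw [Measure.map_apply (hXt t) hfrm] at hmap
    have hae : ∀ᵐ ω ∂P, X t ω ∉ frontier B := by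
      rw [MeasureTheory.ae_iff]
      simpa [Set.preimage] using hmap
    filter_upwards [hcont, hae] with ω hc hfrω
    have hT : Filter.Tendsto (fun n : ℕ => X (Lam n t) ω) Filter.atTop (𝓝 (X t ω)) :=
      (hc.tendsto t).comp (lam_tendsto t)
    by_cases hmem : X t ω ∈ B
    · have hint : X t ω ∈ interior B := by
        rw [← self_diff_frontier]; exact ⟨hmem, hfrω⟩
      have hev : ∀ᶠ n in Filter.atTop, X (Lam n t) ω ∈ interior B :=
        hT.eventually (isOpen_interior.eventually_mem hint)
      rcases hev.exists_forall_of_atTop with ⟨N, hN⟩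
      exact ⟨N, fun n hn => ⟨fun _ => hmem, fun _ => interior_subset (hN n hn)⟩⟩
    · have hcl : X t ω ∈ (closure B)ᶜ := by
        intro h
        exact hfrω ⟨h, fun h' => hmem (interior_subset h')⟩
      have hev : ∀ᶠ n in Filter.atTop, X (Lam n t) ω ∈ (closure B)ᶜ :=
        hT.eventually (isClosed_closure.isOpen_compl.eventually_mem hcl)
      rcases hev.exists_forall_of_atTop with ⟨N, hN⟩
      exact ⟨N, fun n hn => ⟨fun h => absurd (subset_closure h) (hN n hn),
        fun h => absurd h hmem⟩⟩
end
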